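/- For α > 0 let φ(α) = ∫_α^∞ (1/α − 1/H)·e^{−H} dH. If k_n > k_i > 0 and α_n, α_i > 0 satisfy φ(α_n) = k_n and φ(α_i) = k_i, then α_n < α_i and ∫_{α_n}^∞ e^{−H}/H dH > ∫_{α_i}^∞ e^{−H}/H dH. Consequently, since the noise-only constant k_n = −1.5·P̄/(σ_n²·ln(P_b/c)) exceeds the noise-plus-interference constant k_i = −1.5·P̄/((σ_n²+σ_i²)·ln(P_b/c)) whenever σ_i² > 0, the aggressive water-filling threshold is strictly smaller than the conservative one, and the outage-free spectral efficiency log₂(e)·(e^{−α_n}/α_n − k_n) of the aggressive scheme strictly exceeds the conservative scheme's spectral efficiency log₂(e)·(e^{−α_i}/α_i − k_i). -/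

import Mathlib

open MeasureTheory Real Set


lemma div_lt_div_of_neg' {x A B : ℝ} (hx : x < 0) (hBA : B < A) (hA : A < 0) :
    x / B < x / A := by
  have hB : B < 0 := hBA.trans hA
  rw [← neg_div_neg_eq x B, ← neg_div_neg_eq x A,
    div_lt_div_iff₀ (by linarith) (by linarith)]
  nlinarith

lemma intOn_expneg (a : ℝ) : IntegrableOn (fun H => Real.exp (-H)) (Ioi a) := by
  have := exp_neg_integrableOn_Ioi a (b := 1) one_pos
  simpa using this

lemma intOn_E1 {a : ℝ} (ha : 0 < a) :
    IntegrableOn (fun H => Real.exp (-H) / H) (Ioi a) := by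
  apply Integrable.mono' ((intOn_expneg a).div_const a)
  · exact (ContinuousOn.aestronglyMeasurable
      (by fun_prop (disch := intro x hx; exact ne_of_gt (ha.trans hx)))
      measurableSet_Ioi)
  · filter_upwards [ae_restrict_mem measurableSet_Ioi] with H hH
    rw [Real.norm_eq_abs, abs_div, abs_of_pos (Real.exp_pos _),
      abs_of_pos (ha.trans hH)]
    exact div_le_div_of_nonneg_left (Real.exp_pos _).le ha hH.le

lemma intOn_phi {a : ℝ} (ha : 0 < a) :
    IntegrableOn (fun H => (1 / a - 1 / H) * Real.exp (-H)) (Ioi a) := by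
  have h1 : IntegrableOn (fun H => Real.exp (-H) / a) (Ioi a) :=
    (intOn_expneg a).div_const a
  have h2 := intOn_E1 ha
  apply IntegrableOn.congr_fun (h1.sub h2) _ measurableSet_Ioi
  intro H hH
  have : H ≠ 0 := ne_of_gt (ha.trans hH)
  simp only [Pi.sub_apply]
  field_simp

lemma phi_eq {a : ℝ} (ha : 0 < a) :
    (∫ H in Ioi a, (1 / a - 1 / H) * Real.exp (-H))
      = Real.exp (-a) / a - ∫ H in Ioi a, Real.exp (-H) / H := by
  have h1 : IntegrableOn (fun H => Real.exp (-H) / a) (Ioi a) :=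
    (intOn_expneg a).div_const a
  have h2 := intOn_E1 ha
  rw [show (fun H => (1 / a - 1 / H) * Real.exp (-H))
      = fun H => Real.exp (-H) / a - Real.exp (-H) / H from by
      funext H; by_cases h : H = 0
      · simp [h]
      · field_simp] at *
  rw [integral_sub h1 h2, integral_div, integral_exp_neg_Ioi]

lemma phi_anti {a b : ℝ} (ha : 0 < a) (hab : a ≤ b) :
    (∫ H in Ioi b, (1 / b - 1 / H) * Real.exp (-H))
      ≤ ∫ H in Ioi a, (1 / a - 1 / H) * Real.exp (-H) := by
  have hb : 0 < b := ha.trans_le hab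
  have step1 : (∫ H in Ioi b, (1 / b - 1 / H) * Real.exp (-H))
      ≤ ∫ H in Ioi b, (1 / a - 1 / H) * Real.exp (-H) := by
    apply setIntegral_mono_on (intOn_phi hb) ((intOn_phi ha).mono_set (Ioi_subset_Ioi hab))
      measurableSet_Ioi
    intro H hH
    have : 1 / b ≤ 1 / a := one_div_le_one_div_of_le ha hab
    nlinarith [Real.exp_pos (-H)]
  refine step1.trans ?_
  apply setIntegral_mono_set (intOn_phi ha) _ (HasSubset.Subset.eventuallyLE (Ioi_subset_Ioi hab))
  filter_upwards [ae_restrict_mem measurableSet_Ioi] with H hH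
  have hH' : (0:ℝ) < H := ha.trans hH
  have h1 : 1 / H ≤ 1 / a := one_div_le_one_div_of_le ha hH.le
  simp only [Pi.zero_apply]
  exact mul_nonneg (by linarith) (Real.exp_pos _).le

/-- If `φ(α_n) = k_n` and `φ(α_i) = k_i` with `k_n > k_i > 0`, where
`φ(α) = ∫_α^∞ (1/α − 1/H)e^{−H} dH`, then `α_n < α_i` and
`∫_{α_n}^∞ e^{−H}/H dH > ∫_{α_i}^∞ e^{−H}/H dH`. Since the noise-only constant
`k_n = −1.5·P̄/(σ_n²·ln(P_b/c))` exceeds `k_i = −1.5·P̄/((σ_n²+σ_i²)·ln(P_b/c))` whenever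
`σ_i² > 0`, the aggressive threshold is smaller than the conservative one and the
outage-free aggressive spectral efficiency `log₂(e)(e^{−α_n}/α_n − k_n)` strictly exceeds
the conservative one `log₂(e)(e^{−α_i}/α_i − k_i)`. -/
theorem aggressive_threshold_lt_conservative
    (kn ki αn αi : ℝ) (hki : 0 < ki) (hkn : ki < kn) (hαn : 0 < αn) (hαi : 0 < αi)
    (hφn : (∫ H in Ioi αn, (1 / αn - 1 / H) * Real.exp (-H)) = kn)
    (hφi : (∫ H in Ioi αi, (1 / αi - 1 / H) * Real.exp (-H)) = ki) :
    αn < αi ∧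
    (∫ H in Ioi αn, Real.exp (-H) / H) > (∫ H in Ioi αi, Real.exp (-H) / H) ∧
    Real.logb 2 (Real.exp 1) * (Real.exp (-αn) / αn - kn)
      > Real.logb 2 (Real.exp 1) * (Real.exp (-αi) / αi - ki) ∧
    (∀ Pbar σn2 σi2 Pb c : ℝ, 0 < Pbar → 0 < σn2 → 0 < σi2 → 0 < Pb → Pb < c →
      -1.5 * Pbar / (σn2 * Real.log (Pb / c))
        > -1.5 * Pbar / ((σn2 + σi2) * Real.log (Pb / c))) := by

  have hlt : αn < αi := by
    by_contra h
    push_neg at h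
    have := phi_anti hαi h
    rw [hφn, hφi] at this
    linarith
  have hE1 : (∫ H in Ioi αn, Real.exp (-H) / H) > ∫ H in Ioi αi, Real.exp (-H) / H := by
    have hsplit : (∫ H in Ioi αn, Real.exp (-H) / H)
        = (∫ H in Ioc αn αi, Real.exp (-H) / H) + ∫ H in Ioi αi, Real.exp (-H) / H := by
      rw [← setIntegral_union (Set.Ioc_disjoint_Ioi le_rfl) measurableSet_Ioi
        ((intOn_E1 hαn).mono_set Ioc_subset_Ioi_self)
        ((intOn_E1 hαn).mono_set (Ioi_subset_Ioi hlt.le)),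
        Set.Ioc_union_Ioi_eq_Ioi hlt.le]
    have hpos : 0 < ∫ H in Ioc αn αi, Real.exp (-H) / H := by
      rw [← intervalIntegral.integral_of_le hlt.le]
      apply intervalIntegral.intervalIntegral_pos_of_pos_on _ _ hlt
      · apply ContinuousOn.intervalIntegrable
        apply ContinuousOn.div (Real.continuous_exp.comp continuous_neg).continuousOn continuousOn_id
        intro x hx
        rw [Set.uIcc_of_le hlt.le] at hx
        exact ne_of_gt (hαn.trans_le hx.1)
      · intro x hx
        exact div_pos (Real.exp_pos _) (hαn.trans hx.1)
    linarith
  refine ⟨hlt, hE1, ?_, ?_⟩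
  · have hn := phi_eq hαn
    have hi := phi_eq hαi
    rw [hφn] at hn; rw [hφi] at hi
    have hb : 0 < Real.logb 2 (Real.exp 1) := by
      apply Real.logb_pos one_lt_two
      have := Real.exp_one_gt_d9
      linarith
    have : Real.exp (-αn) / αn - kn > Real.exp (-αi) / αi - ki := by linarith
    exact mul_lt_mul_of_pos_left this hb
  · intro Pbar σn2 σi2 Pb c hP hσn hσi hPb hPbc
    have hL : Real.log (Pb / c) < 0 :=
      Real.log_neg (div_pos hPb (hPb.trans hPbc)) ((div_lt_one (hPb.trans hPbc)).2 hPbc)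
    have hB : (σn2 + σi2) * Real.log (Pb / c) < σn2 * Real.log (Pb / c) := by nlinarith
    have hA : σn2 * Real.log (Pb / c) < 0 := by nlinarith
    have hB0 : (σn2 + σi2) * Real.log (Pb / c) < 0 := hB.trans hA
    exact div_lt_div_of_neg' (by nlinarith) hB hA
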